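/- (CLF Backstepping.) Let η̄ ∈ ℝᵖ, let V : ℝᵖ → ℝ be continuously differentiable with V(η̄) = 0 and V(η) > 0 for all η ≠ η̄, let f̄ : ℝᵖ → ℝᵖ and Ḡ : ℝᵖ → ℝ^{p×r} be maps, let γ₀ : ℝ_{≥0} → ℝ_{≥0} be a class-K function, and let k : ℝᵖ → ℝʳ be continuously differentiable with ⟨∇V(η), f̄(η) + Ḡ(η)k(η)⟩ ≤ −γ₀(V(η)) for all η ∈ ℝᵖ. Let f₁ : ℝᵖ × ℝʳ → ℝʳ be any map, and let G₁ : ℝᵖ × ℝʳ → ℝ^{r×m} be such that for every (η, z) the map w ↦ G₁(η,z)ᵀw is injective on ℝʳ (full row rank). For β > 0 define V₁(η, z) = V(η) + (1/(2β))‖z − k(η)‖². Then for every class-K function γ₁ with γ₁(s) < γ₀(s) for all s > 0, and for every (η, z) ∈ ℝᵖ × ℝʳ with (η, z) ≠ (η̄, k(η̄)), one has inf_{υ ∈ ℝᵐ} ⟨∇V₁(η,z), (f̄(η) + Ḡ(η)z, f₁(η,z) + G₁(η,z)υ)⟩ < −γ₁(V₁(η,z)). -/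

import Mathlib

open scoped RealInnerProductSpace

lemma inner_gradient_eq' {E : Type*} [NormedAddCommGroup E] [InnerProductSpace ℝ E]
    [CompleteSpace E] (f : E → ℝ) (x v : E) :
    ⟪gradient f x, v⟫ = fderiv ℝ f x v := by
  rw [gradient, InnerProductSpace.toDual_symm_apply]

set_option maxHeartbeats 1000000 in
set_option synthInstance.maxHeartbeats 400000 in
lemma backstep_inner_grad {p r : ℕ}
    (V : EuclideanSpace ℝ (Fin p) → ℝ) (hV : ContDiff ℝ 1 V)
    (k : EuclideanSpace ℝ (Fin p) → EuclideanSpace ℝ (Fin r)) (hk : ContDiff ℝ 1 k)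
    (β : ℝ) (hβ : β ≠ 0)
    (η a : EuclideanSpace ℝ (Fin p)) (z b : EuclideanSpace ℝ (Fin r)) :
    ⟪gradient (fun w : WithLp 2 (EuclideanSpace ℝ (Fin p) × EuclideanSpace ℝ (Fin r)) =>
        V ((WithLp.equiv 2 _) w).1 +
          1 / (2 * β) * ‖((WithLp.equiv 2 _) w).2 - k ((WithLp.equiv 2 _) w).1‖ ^ 2)
        ((WithLp.equiv 2 _).symm (η, z)), (WithLp.equiv 2 _).symm (a, b)⟫ =
      ⟪gradient V η, a⟫ + 1 / β * ⟪z - k η, b - fderiv ℝ k η a⟫ := by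
  set w : WithLp 2 (EuclideanSpace ℝ (Fin p) × EuclideanSpace ℝ (Fin r)) :=
    (WithLp.equiv 2 _).symm (η, z) with hw
  set A : WithLp 2 (EuclideanSpace ℝ (Fin p) × EuclideanSpace ℝ (Fin r)) →L[ℝ]
      EuclideanSpace ℝ (Fin p) :=
    (ContinuousLinearMap.fst ℝ (EuclideanSpace ℝ (Fin p)) (EuclideanSpace ℝ (Fin r))).comp
      (WithLp.prodContinuousLinearEquiv 2 ℝ (EuclideanSpace ℝ (Fin p)) (EuclideanSpace ℝ (Fin r)) :
        WithLp 2 (EuclideanSpace ℝ (Fin p) × EuclideanSpace ℝ (Fin r)) →L[ℝ]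
          EuclideanSpace ℝ (Fin p) × EuclideanSpace ℝ (Fin r)) with hA
  set B : WithLp 2 (EuclideanSpace ℝ (Fin p) × EuclideanSpace ℝ (Fin r)) →L[ℝ]
      EuclideanSpace ℝ (Fin r) :=
    (ContinuousLinearMap.snd ℝ (EuclideanSpace ℝ (Fin p)) (EuclideanSpace ℝ (Fin r))).comp
      (WithLp.prodContinuousLinearEquiv 2 ℝ (EuclideanSpace ℝ (Fin p)) (EuclideanSpace ℝ (Fin r)) :
        WithLp 2 (EuclideanSpace ℝ (Fin p) × EuclideanSpace ℝ (Fin r)) →L[ℝ]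
          EuclideanSpace ℝ (Fin p) × EuclideanSpace ℝ (Fin r)) with hB
  set G := B - (fderiv ℝ k η).comp A with hG
  have hgd : HasFDerivAt (fun u => B u - k (A u)) G w := by
    have h1 : HasFDerivAt (fun u => k (A u)) ((fderiv ℝ k η).comp A) w := by
      exact
        ((hk.differentiable one_ne_zero η).hasFDerivAt (𝕜 := ℝ)).comp w A.hasFDerivAt
    exact (B.hasFDerivAt).sub h1
  have hVd : HasFDerivAt (fun u => V (A u)) ((fderiv ℝ V η).comp A) w := by
    exact
      ((hV.differentiable one_ne_zero η).hasFDerivAt (𝕜 := ℝ)).comp w A.hasFDerivAt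
  have hinner : HasFDerivAt (fun u => ⟪B u - k (A u), B u - k (A u)⟫)
      ((fderivInnerCLM ℝ (z - k η, z - k η)).comp (G.prod G)) w := hgd.inner ℝ hgd
  set D := (fderiv ℝ V η).comp A +
      (1 / (2 * β)) • ((fderivInnerCLM ℝ (z - k η, z - k η)).comp (G.prod G)) with hD
  have hDd : HasFDerivAt (fun u => V (A u) + 1 / (2 * β) * ⟪B u - k (A u), B u - k (A u)⟫)
      D w := hVd.add (hinner.const_mul _)
  have hfun : (fun u : WithLp 2 (EuclideanSpace ℝ (Fin p) × EuclideanSpace ℝ (Fin r)) =>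
      V ((WithLp.equiv 2 _) u).1 +
      1 / (2 * β) * ‖((WithLp.equiv 2 _) u).2 - k ((WithLp.equiv 2 _) u).1‖ ^ 2) =
      fun u => V (A u) + 1 / (2 * β) * ⟪B u - k (A u), B u - k (A u)⟫ := by
    funext u
    rw [real_inner_self_eq_norm_sq]; rfl
  rw [inner_gradient_eq', hfun, hDd.fderiv]
  have hGu : G ((WithLp.equiv 2 _).symm (a, b)) = b - fderiv ℝ k η a := rfl
  have hAu : A ((WithLp.equiv 2 _).symm (a, b)) = a := rfl
  simp only [hD, ContinuousLinearMap.add_apply, ContinuousLinearMap.smul_apply,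
    ContinuousLinearMap.coe_comp', Function.comp_apply, ContinuousLinearMap.prod_apply, hGu, hAu,
    fderivInnerCLM_apply, smul_eq_mul]
  rw [inner_gradient_eq', real_inner_comm (b - fderiv ℝ k η a) (z - k η)]
  field_simp
  ring

/-- CLF backstepping: if `V` is a positive-definite CLF for the
top subsystem `η̇ = f̄(η) + Ḡ(η)z` certified by a C¹ virtual controller `k`
with class-K rate `γ₀`, then the backstepped function
`V₁(η,z) = V(η) + (1/(2β))‖z - k(η)‖²` satisfies the strict CLF infimum
condition for the cascaded system with any class-K rate `γ₁ < γ₀` away from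
the point `(η̄, k(η̄))`. -/
theorem stmt_16 {p r m : ℕ}
    (ηbar : EuclideanSpace ℝ (Fin p))
    (V : EuclideanSpace ℝ (Fin p) → ℝ)
    (hV : ContDiff ℝ 1 V)
    (hV0 : V ηbar = 0)
    (hVpos : ∀ η, η ≠ ηbar → 0 < V η)
    (fb : EuclideanSpace ℝ (Fin p) → EuclideanSpace ℝ (Fin p))
    (Gb : EuclideanSpace ℝ (Fin p) →
      (EuclideanSpace ℝ (Fin r) →L[ℝ] EuclideanSpace ℝ (Fin p)))
    (γ₀ : ℝ → ℝ)
    (hγ₀cont : ContinuousOn γ₀ (Set.Ici 0))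
    (hγ₀mono : StrictMonoOn γ₀ (Set.Ici 0))
    (hγ₀0 : γ₀ 0 = 0)
    (hγ₀nonneg : ∀ s, 0 ≤ s → 0 ≤ γ₀ s)
    (k : EuclideanSpace ℝ (Fin p) → EuclideanSpace ℝ (Fin r))
    (hk : ContDiff ℝ 1 k)
    (hCLF : ∀ η, ⟪gradient V η, fb η + Gb η (k η)⟫ ≤ -γ₀ (V η))
    (f₁ : EuclideanSpace ℝ (Fin p) × EuclideanSpace ℝ (Fin r) →
      EuclideanSpace ℝ (Fin r))
    (G₁ : EuclideanSpace ℝ (Fin p) × EuclideanSpace ℝ (Fin r) →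
      (EuclideanSpace ℝ (Fin m) →L[ℝ] EuclideanSpace ℝ (Fin r)))
    (hG₁ : ∀ w, Function.Injective ((G₁ w).adjoint))
    (β : ℝ) (hβ : 0 < β)
    (γ₁ : ℝ → ℝ)
    (hγ₁cont : ContinuousOn γ₁ (Set.Ici 0))
    (hγ₁mono : StrictMonoOn γ₁ (Set.Ici 0))
    (hγ₁0 : γ₁ 0 = 0)
    (hγ₁nonneg : ∀ s, 0 ≤ s → 0 ≤ γ₁ s)
    (hγ₁lt : ∀ s : ℝ, 0 < s → γ₁ s < γ₀ s) :
    let e := WithLp.equiv 2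
      (EuclideanSpace ℝ (Fin p) × EuclideanSpace ℝ (Fin r))
    let V₁ : WithLp 2 (EuclideanSpace ℝ (Fin p) × EuclideanSpace ℝ (Fin r)) → ℝ :=
      fun w => V (e w).1 + 1 / (2 * β) * ‖(e w).2 - k (e w).1‖ ^ 2
    ∀ (η : EuclideanSpace ℝ (Fin p)) (z : EuclideanSpace ℝ (Fin r)),
      (η, z) ≠ (ηbar, k ηbar) →
      ∃ υ : EuclideanSpace ℝ (Fin m),
        ⟪gradient V₁ (e.symm (η, z)),
            e.symm (fb η + Gb η z, f₁ (η, z) + G₁ (η, z) υ)⟫ <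
          -γ₁ (V₁ (e.symm (η, z))) := by
  intro e V₁ η z hne
  have hβ' : β ≠ 0 := hβ.ne'
  by_cases hz : z = k η
  · -- on the manifold z = k η: use the virtual controller, υ = 0
    have hη : η ≠ ηbar := by
      intro h
      exact hne (by rw [h, hz, h])
    refine ⟨0, ?_⟩
    have key : (⟪gradient V₁ (e.symm (η, z)),
        e.symm (fb η + Gb η z, f₁ (η, z) + G₁ (η, z) 0)⟫ : ℝ) =
        ⟪gradient V η, fb η + Gb η z⟫ +
          1 / β * ⟪z - k η, (f₁ (η, z) + G₁ (η, z) 0) - fderiv ℝ k η (fb η + Gb η z)⟫ :=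
      backstep_inner_grad V hV k hk β hβ' η (fb η + Gb η z) z (f₁ (η, z) + G₁ (η, z) 0)
    have hzk : z - k η = 0 := sub_eq_zero.mpr hz
    have hV₁ : V₁ (e.symm (η, z)) = V η := by
      show V η + 1 / (2 * β) * ‖z - k η‖ ^ 2 = V η
      rw [hzk]
      simp
    rw [key, hzk, hV₁]
    simp only [inner_zero_left, mul_zero, add_zero]
    have h1 : ⟪gradient V η, fb η + Gb η z⟫ ≤ -γ₀ (V η) := by rw [hz]; exact hCLF η
    have h2 : γ₁ (V η) < γ₀ (V η) := hγ₁lt _ (hVpos η hη)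
    linarith
  · -- off the manifold: push along the adjoint direction
    have hzk : z - k η ≠ 0 := sub_ne_zero.mpr hz
    set q : EuclideanSpace ℝ (Fin m) := (G₁ (η, z)).adjoint (z - k η) with hqdef
    have hq : q ≠ 0 := by
      intro h
      exact hzk (hG₁ (η, z) (h.trans (map_zero _).symm))
    have hq2 : (‖q‖ : ℝ) ^ 2 ≠ 0 := pow_ne_zero _ (norm_ne_zero_iff.mpr hq)
    set S : ℝ := ⟪gradient V η, fb η + Gb η z⟫ with hSdef
    set I : ℝ := ⟪z - k η, f₁ (η, z) - fderiv ℝ k η (fb η + Gb η z)⟫ with hIdef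
    set c : ℝ := γ₁ (V₁ (e.symm (η, z))) with hcdef
    set t : ℝ := β * (S + 1 / β * I + c + 1) / ‖q‖ ^ 2 with htdef
    refine ⟨(-t) • q, ?_⟩
    have key : (⟪gradient V₁ (e.symm (η, z)),
        e.symm (fb η + Gb η z, f₁ (η, z) + G₁ (η, z) ((-t) • q))⟫ : ℝ) =
        S + 1 / β * ⟪z - k η,
          (f₁ (η, z) + G₁ (η, z) ((-t) • q)) - fderiv ℝ k η (fb η + Gb η z)⟫ :=
      backstep_inner_grad V hV k hk β hβ' η (fb η + Gb η z) z _
    have hsplit : (f₁ (η, z) + G₁ (η, z) ((-t) • q)) - fderiv ℝ k η (fb η + Gb η z) =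
        (f₁ (η, z) - fderiv ℝ k η (fb η + Gb η z)) + G₁ (η, z) ((-t) • q) := by
      abel
    have hadj : (⟪z - k η, G₁ (η, z) ((-t) • q)⟫ : ℝ) = -t * ‖q‖ ^ 2 := by
      rw [← ContinuousLinearMap.adjoint_inner_left (G₁ (η, z)) ((-t) • q) (z - k η),
        ← hqdef, real_inner_smul_right, real_inner_self_eq_norm_sq]
    have ht : t * ‖q‖ ^ 2 = β * (S + 1 / β * I + c + 1) := by
      rw [htdef]
      field_simp
    rw [key, hsplit, inner_add_right, hadj, ← hIdef]
    have hfinal : S + 1 / β * (I + -t * ‖q‖ ^ 2) = -c - 1 := by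
      have : (-t) * ‖q‖ ^ 2 = -(β * (S + 1 / β * I + c + 1)) := by
        rw [neg_mul, ht]
      rw [this]
      field_simp
      ring
    rw [hfinal]
    linarith
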